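/- Let Z be a nonnegative random variable, ν ≥ 1, A ≥ 2, Θ₁ > 0 reals, and suppose P(Z > θ) ≤ 2A·exp(−θ^(2/ν)/(2e·Θ₁^(2/ν))) for all θ > 0. Then for all real p ≥ 1, E[Z^(2p)] ≤ (p^(νp) + (ln A)^(νp)) · ((8eν)^ν · Θ₁²)^p. -/

import Mathlib

open MeasureTheory Set Real

-- sup bound: x^a e^{-x/b} ≤ (ab/e)^a
lemma aux_rpow_exp {a b x : ℝ} (ha : 0 ≤ a) (hb : 0 < b) (hx : 0 ≤ x) :
    x ^ a * Real.exp (-(x / b)) ≤ (a * b / Real.exp 1) ^ a := by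
  rcases eq_or_lt_of_le ha with h0 | ha'
  · rw [← h0]
    simp only [Real.rpow_zero, one_mul]
    rw [Real.exp_le_one_iff]
    simp [div_nonneg hx hb.le]
  · have hab : 0 < a * b := mul_pos ha' hb
    have key : x ^ a ≤ (a * b / Real.exp 1) ^ a * Real.exp (x / b) := by
      have h1 : Real.exp 1 * (x / (a * b)) ≤ Real.exp (x / (a * b)) := by
        have := Real.add_one_le_exp (x / (a * b) - 1)
        have h2 : Real.exp (x / (a*b) - 1) * Real.exp 1 = Real.exp (x / (a*b)) := by
          rw [← Real.exp_add]; ring_nf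
        nlinarith [Real.exp_pos (1:ℝ), Real.exp_pos (x/(a*b))]
      have hxab : (a * b / Real.exp 1) * (Real.exp 1 * (x / (a * b))) = x := by
        rw [div_mul_eq_mul_div, mul_div_assoc]
        rw [mul_comm (Real.exp 1) (x / (a*b)), mul_div_assoc, div_self (Real.exp_ne_zero 1),
          mul_one]
        rw [mul_div_assoc', mul_comm, mul_div_assoc, div_self (by positivity : a*b ≠ 0), mul_one]
      calc x ^ a = ((a * b / Real.exp 1) * (Real.exp 1 * (x / (a * b)))) ^ a := by rw [hxab]
        _ ≤ ((a * b / Real.exp 1) * Real.exp (x / (a * b))) ^ a := by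
            apply Real.rpow_le_rpow (by positivity) _ ha
            exact mul_le_mul_of_nonneg_left h1 (by positivity)
        _ = (a * b / Real.exp 1) ^ a * (Real.exp (x / (a * b))) ^ a := by
            rw [Real.mul_rpow (by positivity) (Real.exp_pos _).le]
        _ = (a * b / Real.exp 1) ^ a * Real.exp (x / b) := by
            rw [← Real.exp_mul]
            congr 1
            field_simp
    calc x ^ a * Real.exp (-(x / b)) ≤
        ((a * b / Real.exp 1) ^ a * Real.exp (x / b)) * Real.exp (-(x / b)) :=
          mul_le_mul_of_nonneg_right key (Real.exp_pos _).le
      _ = (a * b / Real.exp 1) ^ a := by rw [mul_assoc, ← Real.exp_add]; simp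

lemma aux_exp_integrable (a : ℝ) {b : ℝ} (hb : 0 < b) :
    IntegrableOn (fun x => Real.exp (-((x - a) / b))) (Ioi a) := by
  have : (fun x => Real.exp (-((x - a) / b))) =
      fun x => Real.exp (a / b) * Real.exp (-(b⁻¹) * x) := by
    funext x; rw [← Real.exp_add]; congr 1; field_simp; ring
  rw [this]
  exact (exp_neg_integrableOn_Ioi a (by positivity)).const_mul _

lemma aux_exp_integral (a : ℝ) {b : ℝ} (hb : 0 < b) :
    ∫ x in Ioi a, Real.exp (-((x - a) / b)) = b := by
  have h1 : ∀ x : ℝ, Real.exp (-((x - a) / b)) =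
      Real.exp (a / b) * Real.exp (-(b⁻¹ * x)) := by
    intro x; rw [← Real.exp_add]; congr 1; field_simp; ring
  simp_rw [h1]
  rw [MeasureTheory.integral_const_mul _ _]
  have h2 : ∫ x in Ioi a, Real.exp (-(b⁻¹ * x)) = b * Real.exp (-(b⁻¹ * a)) := by
    have := integral_comp_mul_left_Ioi (fun y => Real.exp (-y)) a (b := b⁻¹) (by positivity)
    simp only [smul_eq_mul] at this
    rw [this, integral_exp_neg_Ioi]
    field_simp
  rw [h2, mul_comm b, ← mul_assoc, ← Real.exp_add]
  have : a / b + -(b⁻¹ * a) = 0 := by field_simp; ring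
  rw [this]
  simp
open MeasureTheory Set Real

lemma core_meas (q c A : ℝ) :
    Measurable (fun x : ℝ => q * x ^ (q-1) * min 1 (2*A*Real.exp (-(x/c)))) := by
  measurability

lemma core_integrable {q c A : ℝ} (hq : 1 ≤ q) (hc : 0 < c) (hA : 2 ≤ A) :
    IntegrableOn (fun x : ℝ => q * x ^ (q-1) * min 1 (2*A*Real.exp (-(x/c)))) (Ioi 0) := by
  set M : ℝ := ((q-1) * (2*c) / Real.exp 1) ^ (q-1) with hM
  have hM0 : 0 ≤ M := Real.rpow_nonneg (div_nonneg (mul_nonneg (by linarith) (by linarith)) (Real.exp_pos 1).le) _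
  apply Integrable.mono' (g := fun x => (q * (2*A) * M) * Real.exp (-((2*c)⁻¹) * x))
  · exact ((exp_neg_integrableOn_Ioi 0 (by positivity)).const_mul _)
  · exact (core_meas q c A).aestronglyMeasurable
  · rw [ae_restrict_iff' measurableSet_Ioi]
    filter_upwards with x hx
    have hx0 : (0:ℝ) < x := hx
    have hmin0 : 0 ≤ min 1 (2*A*Real.exp (-(x/c))) := le_min one_pos.le (by positivity)
    have hnn : 0 ≤ q * x ^ (q-1) * min 1 (2*A*Real.exp (-(x/c))) := by
      apply mul_nonneg (mul_nonneg (by linarith) (Real.rpow_nonneg hx0.le _)) hmin0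
    rw [Real.norm_eq_abs, abs_of_nonneg hnn]
    have h1 : min 1 (2*A*Real.exp (-(x/c))) ≤ 2*A*Real.exp (-(x/c)) := min_le_right _ _
    have hsplit : Real.exp (-(x/c)) = Real.exp (-(x/(2*c))) * Real.exp (-(x/(2*c))) := by
      rw [← Real.exp_add]; congr 1; field_simp; ring
    have h2 : x ^ (q-1) * Real.exp (-(x/(2*c))) ≤ M :=
      aux_rpow_exp (by linarith) (by positivity) hx0.le
    have h3 : Real.exp (-((2*c)⁻¹) * x) = Real.exp (-(x/(2*c))) := by
      congr 1; field_simp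
    calc q * x ^ (q-1) * min 1 (2*A*Real.exp (-(x/c)))
        ≤ q * x ^ (q-1) * (2*A*Real.exp (-(x/c))) := by
          apply mul_le_mul_of_nonneg_left h1
          exact mul_nonneg (by linarith) (Real.rpow_nonneg hx0.le _)
      _ = (q * (2*A)) * (x ^ (q-1) * Real.exp (-(x/(2*c)))) * Real.exp (-(x/(2*c))) := by
          rw [hsplit]; ring
      _ ≤ (q * (2*A)) * M * Real.exp (-(x/(2*c))) := by
          have : (0:ℝ) ≤ q * (2*A) := by nlinarith
          apply mul_le_mul_of_nonneg_right _ (Real.exp_pos _).le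
          exact mul_le_mul_of_nonneg_left h2 this
      _ = (q * (2*A) * M) * Real.exp (-((2*c)⁻¹) * x) := by rw [h3]
set_option maxHeartbeats 1000000 in
lemma core_bound {q c A : ℝ} (hq : 1 ≤ q) (hc : 0 < c) (hA : 2 ≤ A) :
    ∫ x in Ioi (0:ℝ), q * x ^ (q-1) * min 1 (2*A*Real.exp (-(x/c))) ≤
      (q ^ q + Real.log A ^ q) * (4*c) ^ q := by
  have hq0 : (0:ℝ) < q := by linarith
  have hq1 : (0:ℝ) ≤ q - 1 := by linarith
  have hA0 : (0:ℝ) < A := by linarith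
  have h2A : (1:ℝ) < 2 * A := by linarith
  set L : ℝ := Real.log A with hLdef
  have hL : 0 < L := Real.log_pos (by linarith)
  set u₀ : ℝ := Real.log (2*A) with hu₀def
  have hu₀ : 0 < u₀ := Real.log_pos h2A
  have hu₀L : u₀ ≤ 2 * L := by
    rw [hu₀def, Real.log_mul (by norm_num) hA0.ne']
    have : Real.log 2 ≤ L := Real.log_le_log (by norm_num) hA
    linarith
  set s₀ : ℝ := c * u₀ with hs₀def
  have hs₀ : 0 < s₀ := mul_pos hc hu₀
  set F : ℝ → ℝ := fun x => q * x ^ (q-1) * min 1 (2*A*Real.exp (-(x/c))) with hF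
  set M : ℝ := ((q-1) * (2*c) / Real.exp 1) ^ (q-1) with hMdef
  have hM0 : 0 ≤ M :=
    Real.rpow_nonneg (div_nonneg (mul_nonneg (by linarith) (by linarith)) (Real.exp_pos 1).le) _
  have hFnn : ∀ x : ℝ, 0 < x → 0 ≤ F x := by
    intro x hx
    exact mul_nonneg (mul_nonneg hq0.le (Real.rpow_nonneg hx.le _))
      (le_min one_pos.le (by positivity))
  have hFint : IntegrableOn F (Ioi 0) := core_integrable hq hc hA
  -- split the integral
  rw [← Ioc_union_Ioi_eq_Ioi hs₀.le, setIntegral_union Ioc_disjoint_Ioi_same measurableSet_Ioi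
    (hFint.mono_set (Ioc_subset_Ioi_self.trans (Ioi_subset_Ioi le_rfl)))
    (hFint.mono_set (Ioi_subset_Ioi hs₀.le))]
  -- first piece
  have hgint : IntegrableOn (fun x : ℝ => q * x ^ (q-1)) (Ioc 0 s₀) := by
    have := (intervalIntegral.intervalIntegrable_rpow' (a := 0) (b := s₀)
      (r := q - 1) (by linarith)).const_mul q
    rwa [intervalIntegrable_iff_integrableOn_Ioc_of_le hs₀.le] at this
  have piece1 : ∫ x in Ioc 0 s₀, F x ≤ s₀ ^ q := by
    have h1 : ∫ x in Ioc 0 s₀, F x ≤ ∫ x in Ioc 0 s₀, q * x ^ (q-1) := by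
      apply setIntegral_mono_on
        (hFint.mono_set (Ioc_subset_Ioi_self.trans (Ioi_subset_Ioi le_rfl))) hgint
        measurableSet_Ioc
      intro x hx
      have hx0 : 0 < x := hx.1
      rw [hF]
      calc q * x ^ (q-1) * min 1 (2*A*Real.exp (-(x/c)))
          ≤ q * x ^ (q-1) * 1 :=
            mul_le_mul_of_nonneg_left (min_le_left _ _)
              (mul_nonneg hq0.le (Real.rpow_nonneg hx0.le _))
        _ = q * x ^ (q-1) := mul_one _
    have h2 : ∫ x in Ioc 0 s₀, q * x ^ (q-1) = s₀ ^ q := by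
      rw [← intervalIntegral.integral_of_le hs₀.le, intervalIntegral.integral_const_mul,
        integral_rpow (Or.inl (by linarith))]
      rw [Real.zero_rpow (by linarith : q - 1 + 1 ≠ 0)]
      have : q - 1 + 1 = q := by ring
      rw [this]
      field_simp
      simp
    linarith
  -- second piece
  set D : ℝ → ℝ := fun x => q * 2^(q-1) *
    (M * Real.exp (-((x-s₀)/(2*c))) + s₀^(q-1) * Real.exp (-((x-s₀)/c))) with hD
  have hDint : IntegrableOn D (Ioi s₀) := by
    apply Integrable.const_mul
    apply Integrable.add
    · exact (aux_exp_integrable s₀ (by positivity)).const_mul _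
    · exact (aux_exp_integrable s₀ hc).const_mul _
  have piece2 : ∫ x in Ioi s₀, F x ≤ q * 2^(q-1) * (M * (2*c) + s₀^(q-1) * c) := by
    have hmono : ∫ x in Ioi s₀, F x ≤ ∫ x in Ioi s₀, D x := by
      apply setIntegral_mono_on (hFint.mono_set (Ioi_subset_Ioi hs₀.le)) hDint measurableSet_Ioi
      intro x hx
      have hxs : s₀ < x := hx
      have hx0 : 0 < x := lt_trans hs₀ hxs
      have hv : 0 ≤ x - s₀ := by linarith
      -- min ≤ exp(-(x-s₀)/c)
      have hstep1 : min 1 (2*A*Real.exp (-(x/c))) ≤ Real.exp (-((x-s₀)/c)) := by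
        refine (min_le_right _ _).trans ?_
        have : 2*A = Real.exp u₀ := (Real.exp_log (by linarith)).symm
        rw [this, ← Real.exp_add]
        apply Real.exp_le_exp.mpr
        rw [hs₀def]
        field_simp
        ring_nf
        linarith
      -- x^{q-1} ≤ 2^{q-1}((x-s₀)^{q-1} + s₀^{q-1})
      have hstep2 : x ^ (q-1) ≤ 2^(q-1) * ((x-s₀)^(q-1) + s₀^(q-1)) := by
        set m : ℝ := max (x - s₀) s₀ with hm
        have hm0 : 0 ≤ m := le_trans hs₀.le (le_max_right _ _)
        have hxm : x ≤ 2 * m := by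
          have h1 : x - s₀ ≤ m := le_max_left _ _
          have h2 : s₀ ≤ m := le_max_right _ _
          linarith
        calc x ^ (q-1) ≤ (2*m) ^ (q-1) := Real.rpow_le_rpow hx0.le hxm hq1
          _ = 2^(q-1) * m^(q-1) := Real.mul_rpow (by norm_num) hm0
          _ ≤ 2^(q-1) * ((x-s₀)^(q-1) + s₀^(q-1)) := by
              apply mul_le_mul_of_nonneg_left _ (Real.rpow_nonneg (by norm_num) _)
              rcases max_cases (x - s₀) s₀ with ⟨he, _⟩ | ⟨he, _⟩ <;> rw [hm, he]
              · nlinarith [Real.rpow_nonneg hs₀.le (q-1)]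
              · nlinarith [Real.rpow_nonneg hv (q-1)]
      -- (x-s₀)^{q-1} exp(-(x-s₀)/c) ≤ M exp(-(x-s₀)/(2c))
      have hstep3 : (x-s₀)^(q-1) * Real.exp (-((x-s₀)/c)) ≤
          M * Real.exp (-((x-s₀)/(2*c))) := by
        have hsplit : Real.exp (-((x-s₀)/c)) =
            Real.exp (-((x-s₀)/(2*c))) * Real.exp (-((x-s₀)/(2*c))) := by
          rw [← Real.exp_add]; congr 1; field_simp; ring
        rw [hsplit, ← mul_assoc]
        exact mul_le_mul_of_nonneg_right (aux_rpow_exp hq1 (by positivity) hv)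
          (Real.exp_pos _).le
      have hexpnn : (0:ℝ) ≤ Real.exp (-((x-s₀)/c)) := (Real.exp_pos _).le
      calc F x ≤ q * x ^ (q-1) * Real.exp (-((x-s₀)/c)) := by
            rw [hF]
            exact mul_le_mul_of_nonneg_left hstep1
              (mul_nonneg hq0.le (Real.rpow_nonneg hx0.le _))
        _ ≤ q * (2^(q-1) * ((x-s₀)^(q-1) + s₀^(q-1))) * Real.exp (-((x-s₀)/c)) := by
            apply mul_le_mul_of_nonneg_right _ hexpnn
            exact mul_le_mul_of_nonneg_left hstep2 hq0.le
        _ = q * 2^(q-1) * ((x-s₀)^(q-1) * Real.exp (-((x-s₀)/c))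
              + s₀^(q-1) * Real.exp (-((x-s₀)/c))) := by ring
        _ ≤ D x := by
            rw [hD]
            apply mul_le_mul_of_nonneg_left _
              (mul_nonneg hq0.le (Real.rpow_nonneg (by norm_num) _))
            exact add_le_add hstep3 le_rfl
    have hDval : ∫ x in Ioi s₀, D x = q * 2^(q-1) * (M * (2*c) + s₀^(q-1) * c) := by
      rw [hD]
      rw [MeasureTheory.integral_const_mul _ _]
      rw [integral_add ((aux_exp_integrable s₀ (by positivity)).const_mul _)
        ((aux_exp_integrable s₀ hc).const_mul _)]
      rw [MeasureTheory.integral_const_mul _ _, MeasureTheory.integral_const_mul _ _,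
        aux_exp_integral s₀ (by positivity : (0:ℝ) < 2*c), aux_exp_integral s₀ hc]
    linarith [hmono, le_of_eq hDval]
  -- final arithmetic
  have e1 : (2:ℝ)*2^(q-1) = 2^q := by
    have h := Real.rpow_add two_pos 1 (q-1)
    rw [show (1:ℝ)+(q-1) = q by ring, Real.rpow_one] at h
    exact h.symm
  have e2 : c*c^(q-1) = c^q := by
    have h := Real.rpow_add hc 1 (q-1)
    rw [show (1:ℝ)+(q-1) = q by ring, Real.rpow_one] at h
    exact h.symm
  have e3 : q*q^(q-1) = q^q := by
    have h := Real.rpow_add hq0 1 (q-1)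
    rw [show (1:ℝ)+(q-1) = q by ring, Real.rpow_one] at h
    exact h.symm
  have e4 : ((c*q):ℝ)^(q-1) = c^(q-1)*q^(q-1) := Real.mul_rpow hc.le hq0.le
  have h2q : (2:ℝ) ≤ 2^q := by
    have h := Real.rpow_le_rpow_of_exponent_le (by norm_num : (1:ℝ) ≤ 2) hq
    rwa [Real.rpow_one] at h
  have hMle : M ≤ (c*q)^(q-1) := by
    apply Real.rpow_le_rpow
      (div_nonneg (mul_nonneg (by linarith) (by linarith)) (Real.exp_pos 1).le) _ hq1
    rw [div_le_iff₀ (Real.exp_pos 1)]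
    have he2 : (2:ℝ) ≤ Real.exp 1 := by
      have := Real.exp_one_gt_d9
      linarith
    nlinarith [mul_nonneg (mul_pos hc hq0).le (by linarith : (0:ℝ) ≤ Real.exp 1 - 2), hc.le]
  have hu₀q : u₀^q ≤ 2^q * L^q := by
    calc u₀^q ≤ (2*L)^q := Real.rpow_le_rpow hu₀.le hu₀L hq0.le
      _ = 2^q * L^q := Real.mul_rpow (by norm_num) hL.le
  have hu₀q1 : u₀^(q-1) ≤ 2^(q-1) * L^(q-1) := by
    calc u₀^(q-1) ≤ (2*L)^(q-1) := Real.rpow_le_rpow hu₀.le hu₀L hq1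
      _ = 2^(q-1) * L^(q-1) := Real.mul_rpow (by norm_num) hL.le
  have hqL : q * L^(q-1) ≤ q^q + L^q := by
    set m : ℝ := max q L with hm
    have hm0 : 0 < m := lt_of_lt_of_le hq0 (le_max_left _ _)
    have h1 : q * L^(q-1) ≤ m * m^(q-1) := by
      apply mul_le_mul (le_max_left _ _)
        (Real.rpow_le_rpow hL.le (le_max_right _ _) hq1)
        (Real.rpow_nonneg hL.le _) hm0.le
    have h2 : m * m^(q-1) = m^q := by
      have h := Real.rpow_add hm0 1 (q-1)
      rw [show (1:ℝ)+(q-1) = q by ring, Real.rpow_one] at h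
      exact h.symm
    have h3 : m^q ≤ q^q + L^q := by
      rcases max_cases q L with ⟨he, _⟩ | ⟨he, _⟩
      · rw [hm, he]; linarith [Real.rpow_nonneg hL.le q]
      · rw [hm, he]; linarith [Real.rpow_nonneg hq0.le q]
    linarith
  -- abbreviations
  set a : ℝ := (2:ℝ)^q with ha
  set X : ℝ := q^q with hX
  set Y : ℝ := L^q with hY
  have hXnn : 0 ≤ X := Real.rpow_nonneg hq0.le _
  have hYnn : 0 ≤ Y := Real.rpow_nonneg hL.le _
  have hcq : (0:ℝ) ≤ c^q := Real.rpow_nonneg hc.le _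
  have h2q1nn : (0:ℝ) ≤ (2:ℝ)^(q-1) := Real.rpow_nonneg (by norm_num) _
  have hcq1nn : (0:ℝ) ≤ c^(q-1) := Real.rpow_nonneg hc.le _
  have hLq1nn : (0:ℝ) ≤ L^(q-1) := Real.rpow_nonneg hL.le _
  have hqq1nn : (0:ℝ) ≤ q^(q-1) := Real.rpow_nonneg hq0.le _
  have hu₀qnn : (0:ℝ) ≤ u₀^(q-1) := Real.rpow_nonneg hu₀.le _
  -- term 1
  have t1 : s₀^q ≤ c^q * (a * Y) := by
    rw [hs₀def, Real.mul_rpow hc.le hu₀.le]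
    calc c^q * u₀^q ≤ c^q * (2^q * L^q) := mul_le_mul_of_nonneg_left hu₀q hcq
      _ = c^q * (a * Y) := rfl
  -- term 2
  have t2 : q * 2^(q-1) * (M * (2*c)) ≤ c^q * (a * X) := by
    have step : q * 2^(q-1) * (M * (2*c)) ≤ q * 2^(q-1) * ((c*q)^(q-1) * (2*c)) := by
      apply mul_le_mul_of_nonneg_left _ (mul_nonneg hq0.le h2q1nn)
      exact mul_le_mul_of_nonneg_right hMle (by linarith)
    have eq2 : q * 2^(q-1) * ((c*q)^(q-1) * (2*c)) = c^q * (a * X) := by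
      rw [e4, ← e1, ← e2, ← e3]
      ring
    linarith
  -- term 3
  have t3 : q * 2^(q-1) * (s₀^(q-1) * c) ≤ c^q * ((a*a/4) * (X + Y)) := by
    have hs₀q1 : s₀^(q-1) = c^(q-1) * u₀^(q-1) := by
      rw [hs₀def]; exact Real.mul_rpow hc.le hu₀.le
    have step1 : q * 2^(q-1) * (s₀^(q-1) * c) ≤
        (c * c^(q-1)) * (2^(q-1) * 2^(q-1)) * (q * L^(q-1)) := by
      rw [hs₀q1]
      have : u₀^(q-1) ≤ 2^(q-1) * L^(q-1) := hu₀q1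
      nlinarith [mul_nonneg (mul_nonneg hq0.le h2q1nn) (mul_nonneg hcq1nn hc.le),
        mul_nonneg h2q1nn hLq1nn]
    have ea : (2:ℝ)^(q-1) = a/2 := by
      rw [← e1]; field_simp
    have step2 : (c * c^(q-1)) * (2^(q-1) * 2^(q-1)) * (q * L^(q-1)) ≤
        c^q * ((a*a/4) * (X + Y)) := by
      rw [e2, ea]
      calc c^q * (a/2 * (a/2)) * (q * L^(q-1))
          ≤ c^q * (a/2 * (a/2)) * (X + Y) := by
            apply mul_le_mul_of_nonneg_left hqL
            apply mul_nonneg hcq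
            positivity
        _ = c^q * ((a*a/4) * (X + Y)) := by ring
    linarith
  -- assemble
  have hrhs : (q^q + L^q) * (4*c)^q = c^q * ((X + Y) * (a*a)) := by
    rw [show ((4:ℝ)*c) = (2*2)*c by norm_num, Real.mul_rpow (by norm_num) hc.le,
      Real.mul_rpow (by norm_num) (by norm_num)]
    ring
  have key : 0 ≤ c^q * (X+Y) * (a*a - a - a*a/4) := by
    apply mul_nonneg (mul_nonneg hcq (add_nonneg hXnn hYnn))
    nlinarith [h2q]
  calc (∫ x in Ioc 0 s₀, F x) + ∫ x in Ioi s₀, F x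
      ≤ s₀^q + q * 2^(q-1) * (M * (2*c) + s₀^(q-1) * c) := add_le_add piece1 piece2
    _ = s₀^q + (q * 2^(q-1) * (M * (2*c)) + q * 2^(q-1) * (s₀^(q-1) * c)) := by ring
    _ ≤ c^q * (a * Y) + (c^q * (a * X) + c^q * ((a*a/4) * (X + Y))) :=
        add_le_add t1 (add_le_add t2 t3)
    _ ≤ c^q * ((X + Y) * (a*a)) := by nlinarith [key]
    _ = (q^q + L^q) * (4*c)^q := hrhs.symm
set_option maxHeartbeats 1000000 in
theorem tail_to_moment_bound {Ω : Type*} [MeasurableSpace Ω]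
    (μ : Measure Ω) [IsProbabilityMeasure μ]
    (Z : Ω → ℝ) (hZ : ∀ ω, 0 ≤ Z ω)
    (ν A Θ₁ : ℝ) (hν : 1 ≤ ν) (hA : 2 ≤ A) (hΘ₁ : 0 < Θ₁)
    (htail : ∀ θ : ℝ, 0 < θ →
      (μ {ω | θ < Z ω}).toReal ≤
        2 * A * Real.exp (-(θ ^ (2 / ν)) / (2 * Real.exp 1 * Θ₁ ^ (2 / ν))))
    (p : ℝ) (hp : 1 ≤ p) :
    ∫ ω, Z ω ^ (2 * p) ∂μ ≤
      (p ^ (ν * p) + Real.log A ^ (ν * p)) * ((8 * Real.exp 1 * ν) ^ ν * Θ₁ ^ 2) ^ p := by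
  have hA0 : (0:ℝ) < A := by linarith
  have hν0 : (0:ℝ) < ν := by linarith
  have hp0 : (0:ℝ) < p := by linarith
  have hL : 0 < Real.log A := Real.log_pos (by linarith)
  set q : ℝ := ν * p with hqdef
  have hq : 1 ≤ q := by nlinarith
  have hq0 : (0:ℝ) < q := by linarith
  set c : ℝ := 2 * Real.exp 1 * Θ₁ ^ (2/ν) with hcdef
  have hc : 0 < c := by positivity
  have hRHS : 0 ≤ (p ^ q + Real.log A ^ q) * ((8 * Real.exp 1 * ν) ^ ν * Θ₁ ^ 2) ^ p := by
    apply mul_nonneg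
    · exact add_nonneg (Real.rpow_nonneg hp0.le _) (Real.rpow_nonneg hL.le _)
    · exact Real.rpow_nonneg (mul_nonneg (Real.rpow_nonneg (by positivity) _) (sq_nonneg _)) _
  by_cases hint : Integrable (fun ω => Z ω ^ (2*p)) μ
  swap
  · rw [integral_undef hint]; exact hRHS
  have hnn : 0 ≤ᵐ[μ] fun ω => Z ω ^ (2*p) :=
    Filter.Eventually.of_forall fun ω => Real.rpow_nonneg (hZ ω) _
  rw [hint.integral_eq_integral_meas_lt hnn]
  set G : ℝ → ℝ := fun t => min 1 (2*A*Real.exp (-(t^(1/q)/c))) with hG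
  -- pointwise tail bound
  have htail2 : ∀ t : ℝ, t ∈ Ioi (0:ℝ) → ((μ {a | t < Z a ^ (2*p)}).toReal) ≤ G t := by
    intro t ht
    have ht0 : (0:ℝ) < t := ht
    have hset : {a | t < Z a ^ (2*p)} = {a | t ^ (2*p)⁻¹ < Z a} := by
      ext a
      exact (Real.rpow_inv_lt_iff_of_pos ht0.le (hZ a) (by positivity)).symm
    have hθ : (0:ℝ) < t ^ (2*p)⁻¹ := Real.rpow_pos_of_pos ht0 _
    have h1 := htail _ hθ
    have hexp : (t ^ (2*p)⁻¹) ^ (2/ν) = t ^ (1/q) := by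
      rw [← Real.rpow_mul ht0.le]
      congr 1
      rw [hqdef]
      field_simp
    apply le_min
    · calc (μ {a | t < Z a ^ (2*p)}).toReal ≤ (1 : ENNReal).toReal :=
            ENNReal.toReal_mono ENNReal.one_ne_top prob_le_one
        _ = 1 := by simp
    · rw [hset]
      have heq2 : (-((t ^ (2*p)⁻¹) ^ (2/ν))) / c = -(t^(1/q)/c) := by
        rw [hexp, neg_div]
      rw [heq2] at h1
      exact h1
  -- relate G to the shifted integrand F
  have hEq : EqOn (fun x : ℝ => q * x ^ (q-1) * min 1 (2*A*Real.exp (-(x/c))))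
      (fun x : ℝ => (|q| * x ^ (q-1)) • G (x^q)) (Ioi 0) := by
    intro x hx
    have hx0 : (0:ℝ) < x := hx
    have hxq : (x^q)^(1/q) = x := by
      rw [← Real.rpow_mul hx0.le, mul_one_div_cancel hq0.ne', Real.rpow_one]
    simp only [hG, smul_eq_mul, hxq, abs_of_pos hq0]
  have hFint := core_integrable (q := q) (c := c) (A := A) hq hc hA
  have hGint : IntegrableOn G (Ioi 0) := by
    rw [← integrableOn_Ioi_comp_rpow_iff G hq0.ne']
    exact hFint.congr_fun hEq measurableSet_Ioi
  have step1 : ∫ t in Ioi (0:ℝ), ((μ {a | t < Z a ^ (2*p)}).toReal) ≤ ∫ t in Ioi (0:ℝ), G t := by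
    apply integral_mono_of_nonneg
    · exact Filter.Eventually.of_forall fun t => ENNReal.toReal_nonneg
    · exact hGint
    · exact (ae_restrict_iff' measurableSet_Ioi).mpr
        (Filter.Eventually.of_forall fun t ht => htail2 t ht)
  have step2 : ∫ t in Ioi (0:ℝ), G t =
      ∫ x in Ioi (0:ℝ), q * x ^ (q-1) * min 1 (2*A*Real.exp (-(x/c))) := by
    rw [← integral_comp_rpow_Ioi G hq0.ne']
    exact (setIntegral_congr_fun measurableSet_Ioi hEq).symm
  have step3 := core_bound (q := q) (c := c) (A := A) hq hc hA
  -- final algebra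
  have halg : (q ^ q + Real.log A ^ q) * (4*c) ^ q ≤
      (p ^ q + Real.log A ^ q) * ((8 * Real.exp 1 * ν) ^ ν * Θ₁ ^ 2) ^ p := by
    have hqq : q ^ q = ν ^ q * p ^ q := Real.mul_rpow hν0.le hp0.le
    have h4c : (4*c) ^ q = (8 * Real.exp 1) ^ q * Θ₁ ^ (2*p) := by
      rw [hcdef, show (4:ℝ) * (2 * Real.exp 1 * Θ₁ ^ (2/ν)) =
        (8 * Real.exp 1) * Θ₁ ^ (2/ν) by ring]
      rw [Real.mul_rpow (by positivity) (Real.rpow_nonneg hΘ₁.le _)]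
      rw [← Real.rpow_mul hΘ₁.le]
      congr 2
      rw [hqdef]
      field_simp
    have hrhs : ((8 * Real.exp 1 * ν) ^ ν * Θ₁ ^ 2) ^ p =
        ((8 * Real.exp 1) ^ q * ν ^ q) * Θ₁ ^ (2*p) := by
      rw [Real.mul_rpow (Real.rpow_nonneg (by positivity) _) (sq_nonneg _)]
      rw [← Real.rpow_natCast Θ₁ 2, ← Real.rpow_mul hΘ₁.le, ← Real.rpow_mul (by positivity)]
      rw [show (ν * p) = q from rfl, ← Real.mul_rpow (by positivity) hν0.le]
      norm_num
    rw [h4c, hrhs, hqq]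
    have hν1 : 1 ≤ ν ^ q := Real.one_le_rpow hν hq0.le
    have h8e : (0:ℝ) ≤ (8 * Real.exp 1) ^ q := Real.rpow_nonneg (by positivity) _
    have hΘ2p : (0:ℝ) ≤ Θ₁ ^ (2*p) := Real.rpow_nonneg hΘ₁.le _
    have hpq : (0:ℝ) ≤ p ^ q := Real.rpow_nonneg hp0.le _
    have hLq : (0:ℝ) ≤ Real.log A ^ q := Real.rpow_nonneg hL.le _
    have key : 0 ≤ ((8 * Real.exp 1) ^ q * Θ₁ ^ (2*p)) * (Real.log A ^ q * (ν ^ q - 1)) := by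
      apply mul_nonneg (mul_nonneg h8e hΘ2p)
      apply mul_nonneg hLq
      linarith
    nlinarith [key]
  calc ∫ t in Ioi (0:ℝ), ((μ {a | t < Z a ^ (2*p)}).toReal)
      ≤ ∫ x in Ioi (0:ℝ), q * x ^ (q-1) * min 1 (2*A*Real.exp (-(x/c))) := by
        rw [← step2]; exact step1
    _ ≤ (q ^ q + Real.log A ^ q) * (4*c) ^ q := step3
    _ ≤ _ := halg
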